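/- Let R be a strongly J-*-clean ring and let x ∈ R satisfy 1 + x x* ∈ U(R). Then x ∈ J(R). -/
import Mathlib


/-- A *-ring `R` is strongly J-*-clean if every element is the sum of a projection
and an element of the Jacobson radical that commute. -/
def StronglyJStarClean (R : Type*) [Ring R] [StarRing R] : Prop :=
  ∀ a : R, ∃ e u : R, e * e = e ∧ star e = e ∧
    u ∈ Ideal.jacobson (⊥ : Ideal R) ∧ a = e + u ∧ a * e = e * a

private lemma swap_unit {R : Type*} [Ring R] {a b : R}
    (h : IsUnit (1 + a * b)) : IsUnit (1 + b * a) := by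
  obtain ⟨w, hw⟩ := h
  have h1 : (1 + a * b) * ↑w⁻¹ = 1 := by rw [← hw]; exact w.mul_inv
  have h2 : (↑w⁻¹ : R) * (1 + a * b) = 1 := by rw [← hw]; exact w.inv_mul
  refine isUnit_iff_exists.mpr ⟨1 - b * ↑w⁻¹ * a, ?_, ?_⟩
  · have : (1 + b * a) * (1 - b * ↑w⁻¹ * a)
        = 1 + b * a - b * (((1 + a * b) * ↑w⁻¹) * a) := by noncomm_ring
    rw [this, h1]; noncomm_ring
  · have : (1 - b * ↑w⁻¹ * a) * (1 + b * a)
        = 1 + b * a - b * ((↑w⁻¹ * (1 + a * b)) * a) := by noncomm_ring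
    rw [this, h2]; noncomm_ring

/-- Noncommutative characterization of the Jacobson radical of `⊥`. -/
private lemma mem_jac_iff {R : Type*} [Ring R] {x : R} :
    x ∈ Ideal.jacobson (⊥ : Ideal R) ↔ ∀ y, IsUnit (1 + y * x) := by
  rw [Ideal.mem_jacobson_iff]
  constructor
  · intro H
    -- first: every `1 + y*x` has a left inverse
    have Hl : ∀ y : R, ∃ z : R, z * (1 + y * x) = 1 := by
      intro y
      obtain ⟨z, hz⟩ := H y
      rw [Ideal.mem_bot, sub_eq_zero] at hz
      refine ⟨z, ?_⟩
      calc z * (1 + y * x) = z * y * x + z := by noncomm_ring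
        _ = 1 := hz
    intro y
    obtain ⟨z, hz⟩ := Hl y
    have hz' : z = 1 + -(z * y) * x := by
      have h1 : z + z * (y * x) = 1 := by
        calc z + z * (y * x) = z * (1 + y * x) := by noncomm_ring
          _ = 1 := hz
      calc z = 1 - z * (y * x) := by rw [← h1]; abel
        _ = 1 + -(z * y) * x := by noncomm_ring
    obtain ⟨v, hv⟩ := Hl (-(z * y))
    rw [← hz'] at hv
    have hvz : v = 1 + y * x := by
      calc v = v * (z * (1 + y * x)) := by rw [hz, mul_one]
        _ = v * z * (1 + y * x) := by rw [mul_assoc]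
        _ = 1 + y * x := by rw [hv, one_mul]
    exact isUnit_iff_exists.mpr ⟨z, by rw [← hvz]; exact hv, hz⟩
  · intro H y
    obtain ⟨v, hv⟩ := H y
    refine ⟨↑v⁻¹, ?_⟩
    rw [Ideal.mem_bot]
    have h1 : (↑v⁻¹ : R) * (1 + y * x) = 1 := by rw [← hv]; exact v.inv_mul
    calc (↑v⁻¹ : R) * y * x + ↑v⁻¹ - 1 = ↑v⁻¹ * (1 + y * x) - 1 := by noncomm_ring
      _ = 0 := by rw [h1]; norm_num

private lemma jac_one_add {R : Type*} [Ring R] {u : R}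
    (h : u ∈ Ideal.jacobson (⊥ : Ideal R)) : IsUnit (1 + u) := by
  have := mem_jac_iff.mp h 1
  rwa [one_mul] at this

private lemma jac_mul_right {R : Type*} [Ring R] {u : R}
    (h : u ∈ Ideal.jacobson (⊥ : Ideal R)) (b : R) :
    u * b ∈ Ideal.jacobson (⊥ : Ideal R) := by
  rw [mem_jac_iff] at h ⊢
  intro y
  have h1 : IsUnit (1 + (b * y) * u) := h (b * y)
  have h2 : IsUnit (1 + b * (y * u)) := by rwa [← mul_assoc]
  have := swap_unit h2
  rwa [mul_assoc] at this

private lemma jac_star {R : Type*} [Ring R] [StarRing R] {u : R}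
    (h : u ∈ Ideal.jacobson (⊥ : Ideal R)) :
    star u ∈ Ideal.jacobson (⊥ : Ideal R) := by
  rw [mem_jac_iff] at h ⊢
  intro y
  have h1 : IsUnit (1 + star y * u) := h (star y)
  have h2 : IsUnit (1 + u * star y) := swap_unit h1
  have h3 := h2.star
  simpa [star_add, star_mul] using h3

theorem stmt_15 (R : Type*) [Ring R] [StarRing R] (h : StronglyJStarClean R) :
    ∀ x : R, IsUnit (1 + x * star x) → x ∈ Ideal.jacobson (⊥ : Ideal R) := by
  intro x hx
  obtain ⟨e, u, he, hes, hu, hxe, hcomm⟩ := h x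
  -- Step 1 : 2 ∈ J(R)
  obtain ⟨f, w, hf, _, hw, hfw, _⟩ := h (-1)
  have hfeq : f = -(1 + w) := by
    have h0 : f + (1 + w) = 0 := by
      have h' : f + w = -1 := hfw.symm
      calc f + (1 + w) = f + w + 1 := by abel
        _ = -1 + 1 := by rw [h']
        _ = 0 := by abel
    exact eq_neg_of_add_eq_zero_left h0
  have hfunit : IsUnit f := by
    rw [hfeq]; exact (jac_one_add hw).neg
  have hf1 : f = 1 := by
    apply hfunit.mul_left_cancel
    rw [hf, mul_one]
  have h2 : (2 : R) ∈ Ideal.jacobson (⊥ : Ideal R) := by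
    rw [hf1] at hfw
    have hweq : w = -2 := by
      have h' : 1 + w = -1 := hfw.symm
      calc w = (1 + w) - 1 := by abel
        _ = -1 - 1 := by rw [h']
        _ = -2 := by norm_num
    have := (Ideal.jacobson (⊥ : Ideal R)).neg_mem hw
    rwa [hweq, neg_neg] at this
  -- Step 2 : the correction term lies in J
  set J := Ideal.jacobson (⊥ : Ideal R) with hJ
  have hsu : star u ∈ J := jac_star hu
  have hjmem : e * star u + u * e + u * star u ∈ J :=
    J.add_mem (J.add_mem (J.mul_mem_left e hsu) (jac_mul_right hu e))
      (jac_mul_right hu (star u))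
  have hdecomp : 1 + x * star x = (1 + e) + (e * star u + u * e + u * star u) := by
    have h1 : 1 + x * star x = 1 + e * e + (e * star u + u * e + u * star u) := by
      rw [hxe, star_add, hes]; noncomm_ring
    rw [h1, he]
  -- Step 3 : 1 + e is a unit
  obtain ⟨va, hva⟩ := hx
  have h1e : IsUnit (1 + e) := by
    have hmem : (↑va⁻¹ : R) * (e * star u + u * e + u * star u) ∈ J :=
      J.mul_mem_left _ hjmem
    have hunit : IsUnit (1 - ↑va⁻¹ * (e * star u + u * e + u * star u)) := by
      have := jac_one_add (J.neg_mem hmem)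
      simpa [sub_eq_add_neg] using this
    have key : (↑va : R) * (1 - ↑va⁻¹ * (e * star u + u * e + u * star u)) = 1 + e := by
      have hva' : (↑va : R) * ↑va⁻¹ = 1 := va.mul_inv
      calc (↑va : R) * (1 - ↑va⁻¹ * (e * star u + u * e + u * star u))
          = ↑va - (↑va * ↑va⁻¹) * (e * star u + u * e + u * star u) := by noncomm_ring
        _ = ↑va - (e * star u + u * e + u * star u) := by rw [hva', one_mul]
        _ = 1 + e := by rw [hva, hdecomp]; abel
    rw [← key]
    exact va.isUnit.mul hunit
  -- Step 4 : e ∈ J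
  obtain ⟨ve, hve⟩ := h1e
  have hve' : (↑ve⁻¹ : R) * (1 + e) = 1 := by rw [← hve]; exact ve.inv_mul
  have heJ : e ∈ J := by
    have key : e = ↑ve⁻¹ * (e * 2) := by
      calc e = (↑ve⁻¹ * (1 + e)) * e := by rw [hve', one_mul]
        _ = ↑ve⁻¹ * (e + e * e) := by noncomm_ring
        _ = ↑ve⁻¹ * (e * 2) := by rw [he, mul_two]
    rw [key]
    exact J.mul_mem_left _ (J.mul_mem_left e h2)
  rw [hxe]
  exact J.add_mem heJ hu
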